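/- Let v and v_hat be vectors in R^d, let S be a set of 2n coordinates of v of largest absolute value and T a set of 2n coordinates of v_hat of largest absolute value. Let v_S = v|_S and v_hat_T = v_hat|_T. Then ||v_S - v_hat_T||_2 <= 3 * ||v_S - v_hat||_2. -/
import Mathlib


open scoped BigOperators

noncomputable def l2 {d : ℕ} (v : Fin d → ℝ) : ℝ := Real.sqrt (∑ i, (v i)^2)

noncomputable def l1 {d : ℕ} (v : Fin d → ℝ) : ℝ := ∑ i, |v i|

noncomputable def linf {d : ℕ} (v : Fin d → ℝ) : ℝ := ⨆ i, |v i|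

noncomputable def restrict {d : ℕ} (v : Fin d → ℝ) (T : Finset (Fin d)) : Fin d → ℝ :=
  fun i => if i ∈ T then v i else 0

open Classical in
noncomputable def spt {d : ℕ} (v : Fin d → ℝ) : Finset (Fin d) :=
  Finset.univ.filter (fun i => v i ≠ 0)

def RIC {N d : ℕ} (Φ : Matrix (Fin N) (Fin d) ℝ) (m : ℕ) (ε : ℝ) : Prop :=
  ∀ z : Fin d → ℝ, (spt z).card ≤ m →
    (1 - ε) * l2 z ≤ l2 (Φ.mulVec z) ∧ l2 (Φ.mulVec z) ≤ (1 + ε) * l2 z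

lemma l2_eq_norm' {d : ℕ} (v : Fin d → ℝ) :
    l2 v = ‖(WithLp.equiv 2 (Fin d → ℝ)).symm v‖ := by
  rw [EuclideanSpace.norm_eq]
  simp [l2, sq_abs]

lemma l2_triangle_sub' {d : ℕ} (a b c : Fin d → ℝ) :
    l2 (a - c) ≤ l2 (a - b) + l2 (b - c) := by
  simp only [l2_eq_norm']
  have h : (WithLp.equiv 2 (Fin d → ℝ)).symm (a - c)
      = (WithLp.equiv 2 (Fin d → ℝ)).symm (a - b) + (WithLp.equiv 2 (Fin d → ℝ)).symm (b - c) := by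
    simp [map_sub]
  rw [h]
  exact norm_add_le _ _

lemma l2_nonneg' {d : ℕ} (v : Fin d → ℝ) : 0 ≤ l2 v := Real.sqrt_nonneg _

/-- Truncation lemma from Corollary 3.2: ‖v_S - v̂_T‖₂ ≤ 3‖v_S - v̂‖₂. -/
theorem stmt15 {d : ℕ} (v vhat : Fin d → ℝ) (n : ℕ)
    (S T : Finset (Fin d)) (hS : S.card = 2 * n) (hT : T.card = 2 * n)
    (hSbig : ∀ i ∈ S, ∀ j ∉ S, |v j| ≤ |v i|)
    (hTbig : ∀ i ∈ T, ∀ j ∉ T, |vhat j| ≤ |vhat i|) :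
    l2 (restrict v S - restrict vhat T) ≤ 3 * l2 (restrict v S - vhat) := by
  classical
  set f : Fin d → ℝ := fun i => (vhat i)^2 with hf
  have hcard : (S \ T).card = (T \ S).card :=
    Finset.card_sdiff_comm (hS.trans hT.symm)
  have key : ∑ i ∈ S \ T, f i ≤ ∑ i ∈ T \ S, f i := by
    rcases Finset.eq_empty_or_nonempty (S \ T) with h | h
    · rw [h]
      simp only [Finset.sum_empty]
      exact Finset.sum_nonneg fun i _ => sq_nonneg _
    · have hTS : (T \ S).Nonempty := by
        rw [← Finset.card_pos, ← hcard, Finset.card_pos]; exact h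
      set m := (T \ S).inf' hTS f with hm
      have hle : ∀ i ∈ S \ T, f i ≤ m := by
        intro i hi
        apply Finset.le_inf'
        intro j hj
        have hjT : j ∈ T := (Finset.mem_sdiff.mp hj).1
        have hiT : i ∉ T := (Finset.mem_sdiff.mp hi).2
        have h1 := hTbig j hjT i hiT
        have h2 := pow_le_pow_left₀ (abs_nonneg _) h1 2
        simpa [sq_abs] using h2
      calc ∑ i ∈ S \ T, f i ≤ ∑ _i ∈ S \ T, m := Finset.sum_le_sum hle
        _ = (S \ T).card • m := by rw [Finset.sum_const]
        _ = (T \ S).card • m := by rw [hcard]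
        _ ≤ ∑ i ∈ T \ S, f i :=
            Finset.card_nsmul_le_sum _ _ _ (fun j hj => Finset.inf'_le _ hj)
  have hdisj : ∀ A B : Finset (Fin d), Disjoint (A \ B) ((A ∪ B)ᶜ) := by
    intro A B
    rw [Finset.disjoint_left]
    intro i hi hi'
    simp only [Finset.mem_compl, Finset.mem_union, not_or] at hi'
    exact hi'.1 (Finset.mem_sdiff.mp hi).1
  have hsplitT : ∑ i ∈ Tᶜ, f i = ∑ i ∈ S \ T, f i + ∑ i ∈ (S ∪ T)ᶜ, f i := by
    rw [← Finset.sum_union (hdisj S T)]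
    apply Finset.sum_congr _ (fun _ _ => rfl)
    ext i
    simp only [Finset.mem_compl, Finset.mem_union, Finset.mem_sdiff, not_or]
    tauto
  have hsplitS : ∑ i ∈ Sᶜ, f i = ∑ i ∈ T \ S, f i + ∑ i ∈ (S ∪ T)ᶜ, f i := by
    have hdisj' : Disjoint (T \ S) ((S ∪ T)ᶜ) := by
      have := hdisj T S
      rwa [Finset.union_comm] at this
    rw [← Finset.sum_union hdisj']
    apply Finset.sum_congr _ (fun _ _ => rfl)
    ext i
    simp only [Finset.mem_compl, Finset.mem_union, Finset.mem_sdiff, not_or]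
    tauto
  have h1 : l2 (vhat - restrict vhat T) ≤ l2 (restrict v S - vhat) := by
    apply Real.sqrt_le_sqrt
    have lhs : ∑ i, ((vhat - restrict vhat T) i)^2 = ∑ i ∈ Tᶜ, f i := by
      have hpt : ∀ i, ((vhat - restrict vhat T) i)^2 = if i ∈ T then 0 else f i := by
        intro i
        by_cases hi : i ∈ T <;> simp [restrict, hi, hf]
      simp only [hpt]
      rw [Finset.sum_ite, Finset.sum_const_zero, zero_add]
      apply Finset.sum_congr _ (fun _ _ => rfl)
      ext i; simp
    have rhs : ∑ i ∈ Sᶜ, f i ≤ ∑ i, ((restrict v S - vhat) i)^2 := by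
      have hpt : ∀ i, (if i ∈ S then 0 else f i) ≤ ((restrict v S - vhat) i)^2 := by
        intro i
        by_cases hi : i ∈ S
        · simp only [hi, if_true]
          exact sq_nonneg _
        · simp [restrict, hi, hf]
      calc ∑ i ∈ Sᶜ, f i = ∑ i, (if i ∈ S then 0 else f i) := by
            rw [Finset.sum_ite, Finset.sum_const_zero, zero_add]
            apply Finset.sum_congr _ (fun _ _ => rfl)
            ext i; simp
        _ ≤ ∑ i, ((restrict v S - vhat) i)^2 := Finset.sum_le_sum (fun i _ => hpt i)
    calc ∑ i, ((vhat - restrict vhat T) i)^2 = ∑ i ∈ Tᶜ, f i := lhs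
      _ ≤ ∑ i ∈ Sᶜ, f i := by rw [hsplitT, hsplitS]; linarith
      _ ≤ ∑ i, ((restrict v S - vhat) i)^2 := rhs
  have htri := l2_triangle_sub' (restrict v S) vhat (restrict vhat T)
  have hnn := l2_nonneg' (restrict v S - vhat)
  linarith
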